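/- For a self-adjoint operator L with orthonormal eigenbasis {u_k}, eigenvalues λ_k, and a self-adjoint operator G satisfying the domain conditions, for any fixed j and any index l ≥ 1 such that ⟨[L,G]u_j, u_{j+k}⟩ = 0 for all 1 ≤ k ≤ l−1, one has −(1/2)⟨[[L,G],G]u_j, u_j⟩ ≤ (λ_{j+l} − λ_j)^{-1} ‖[L,G]u_j‖², provided λ_{j+l} > λ_j. -/
import Mathlib


open scoped RealInnerProductSpace

/-- If the first `l−1` off-diagonal entries `⟨[L,G]u_j, u_{j+k}⟩` (1 ≤ k ≤ l−1) vanish and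
`λ_{j+l} > λ_j`, then `−(1/2)⟨[[L,G],G]u_j, u_j⟩ ≤ (λ_{j+l} − λ_j)⁻¹ ‖[L,G]u_j‖²`.
The Levitin–Parnovski identity is taken as an available hypothesis. -/
theorem levitin_parnovski_gap_bound
    {H : Type*} [NormedAddCommGroup H] [InnerProductSpace ℝ H] [CompleteSpace H]
    (L G : H →ₗ[ℝ] H) (hL : L.IsSymmetric) (hG : G.IsSymmetric)
    (b : HilbertBasis ℕ ℝ H)
    (lam : ℕ → ℝ) (hmono : Monotone lam)
    (heig : ∀ k, L (b k) = lam k • b k)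
    (j l : ℕ) (hl : 1 ≤ l)
    (hLP : ∑' k : {k : ℕ // lam k ≠ lam j},
        ⟪(L ∘ₗ G - G ∘ₗ L) (b j), b (k : ℕ)⟫ ^ 2 / (lam (k : ℕ) - lam j)
      = -(1 / 2) *
        ⟪((L ∘ₗ G - G ∘ₗ L) ∘ₗ G - G ∘ₗ (L ∘ₗ G - G ∘ₗ L)) (b j), b j⟫)
    (horth : ∀ k, 1 ≤ k → k ≤ l - 1 → ⟪(L ∘ₗ G - G ∘ₗ L) (b j), b (j + k)⟫ = 0)
    (hgap : lam j < lam (j + l)) :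
    -(1 / 2) *
        ⟪((L ∘ₗ G - G ∘ₗ L) ∘ₗ G - G ∘ₗ (L ∘ₗ G - G ∘ₗ L)) (b j), b j⟫
      ≤ (lam (j + l) - lam j)⁻¹ * ‖(L ∘ₗ G - G ∘ₗ L) (b j)‖ ^ 2 := by
  rw [← hLP]
  set v := (L ∘ₗ G - G ∘ₗ L) (b j) with hv
  have hgap' : 0 < lam (j + l) - lam j := sub_pos.mpr hgap
  have hbound : ∀ k : {k : ℕ // lam k ≠ lam j},
      ⟪v, b (k : ℕ)⟫ ^ 2 / (lam (k : ℕ) - lam j)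
        ≤ (lam (j + l) - lam j)⁻¹ * ⟪v, b (k : ℕ)⟫ ^ 2 := by
    rintro ⟨k, hk⟩
    rcases lt_or_gt_of_ne hk with h | h
    · have h1 : ⟪v, b k⟫ ^ 2 / (lam k - lam j) ≤ 0 :=
        div_nonpos_of_nonneg_of_nonpos (sq_nonneg _) (sub_nonpos.mpr h.le)
      have h2 : (0:ℝ) ≤ (lam (j + l) - lam j)⁻¹ * ⟪v, b k⟫ ^ 2 :=
        mul_nonneg (inv_nonneg.mpr hgap'.le) (sq_nonneg _)
      exact h1.trans h2
    · have hjk : j < k := by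
        by_contra hle
        push_neg at hle
        exact absurd (hmono hle) (not_le.mpr h)
      rcases lt_or_ge k (j + l) with hkl | hkl
      · have hc : ⟪v, b k⟫ = 0 := by
          have := horth (k - j) (by omega) (by omega)
          have hkj : j + (k - j) = k := by omega
          rw [hkj] at this
          exact this
        simp [hc]
      · have h1 : lam (j + l) - lam j ≤ lam k - lam j := by
          have := hmono hkl; linarith
        rw [div_eq_inv_mul]
        exact mul_le_mul_of_nonneg_right
          (inv_anti₀ hgap' h1) (sq_nonneg _)
  by_cases hs : Summable (fun k : {k : ℕ // lam k ≠ lam j} =>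
      ⟪v, b (k : ℕ)⟫ ^ 2 / (lam (k : ℕ) - lam j))
  · have hparseval : HasSum (fun k : ℕ => ⟪v, b k⟫ ^ 2) (‖v‖ ^ 2) := by
      have h := b.hasSum_inner_mul_inner v v
      have heq : ∀ k : ℕ, ⟪v, b k⟫ * ⟪b k, v⟫ = ⟪v, b k⟫ ^ 2 := by
        intro k; rw [real_inner_comm (b k) v]; ring
      rw [real_inner_self_eq_norm_sq] at h
      simpa [heq] using h
    have hsub : Summable (fun k : {k : ℕ // lam k ≠ lam j} => ⟪v, b (k : ℕ)⟫ ^ 2) :=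
      hparseval.summable.subtype _
    have hsum2 : Summable (fun k : {k : ℕ // lam k ≠ lam j} =>
        (lam (j + l) - lam j)⁻¹ * ⟪v, b (k : ℕ)⟫ ^ 2) := hsub.mul_left _
    have step1 := Summable.tsum_le_tsum hbound hs hsum2
    have step2 : ∑' k : {k : ℕ // lam k ≠ lam j},
        (lam (j + l) - lam j)⁻¹ * ⟪v, b (k : ℕ)⟫ ^ 2
        = (lam (j + l) - lam j)⁻¹ * ∑' k : {k : ℕ // lam k ≠ lam j}, ⟪v, b (k : ℕ)⟫ ^ 2 :=
      tsum_mul_left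
    have step3 : ∑' k : {k : ℕ // lam k ≠ lam j}, ⟪v, b (k : ℕ)⟫ ^ 2 ≤ ‖v‖ ^ 2 := by
      rw [← hparseval.tsum_eq]
      exact Summable.tsum_subtype_le (fun k : ℕ => ⟪v, b k⟫ ^ 2) _ (fun k => sq_nonneg _)
        hparseval.summable
    calc ∑' k : {k : ℕ // lam k ≠ lam j}, ⟪v, b (k : ℕ)⟫ ^ 2 / (lam (k : ℕ) - lam j)
        ≤ ∑' k : {k : ℕ // lam k ≠ lam j}, (lam (j + l) - lam j)⁻¹ * ⟪v, b (k : ℕ)⟫ ^ 2 := step1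
      _ = (lam (j + l) - lam j)⁻¹ * ∑' k : {k : ℕ // lam k ≠ lam j}, ⟪v, b (k : ℕ)⟫ ^ 2 := step2
      _ ≤ (lam (j + l) - lam j)⁻¹ * ‖v‖ ^ 2 :=
          mul_le_mul_of_nonneg_left step3 (inv_nonneg.mpr hgap'.le)
  · rw [tsum_eq_zero_of_not_summable hs]
    positivity
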